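/- Let u, v be in the same cluster and u, w in different clusters of a graph generated from SBM(n,p,q,k). Then E[|N(u)∩N(v)|] - E[|N(u)∩N(w)|] = n(p-q)² - 2p(p-q). -/
import Mathlib

open MeasureTheory ProbabilityTheory

noncomputable def sbmE {k n : ℕ} (p q : ℝ) (x z : Fin k × Fin n) : ℝ :=
  if z.1 = x.1 then p else q

noncomputable def sbmM {k n : ℕ} (p q : ℝ) (x z : Fin k × Fin n) : ℝ :=
  if z = x then 0 else sbmE p q x z

lemma sbmM_eq {k n : ℕ} (p q : ℝ) (x z : Fin k × Fin n) :
    sbmM p q x z = sbmE p q x z - (if z = x then p else 0) := by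
  by_cases h : z = x
  · subst h; simp [sbmM, sbmE]
  · simp [sbmM, h]

lemma sum_sbmE_mul {k n : ℕ} (p q : ℝ) (x y : Fin k × Fin n) :
    ∑ z : Fin k × Fin n, sbmE p q x z * sbmE p q y z =
      (n : ℝ) * ((k : ℝ) * q^2 +
        (if x.1 = y.1 then p^2 - q^2 else 2 * (p*q - q^2))) := by
  rw [Fintype.sum_prod_type]
  by_cases h : x.1 = y.1
  · have key : ∀ i : Fin k, ∑ j : Fin n, sbmE p q x (i, j) * sbmE p q y (i, j)
        = (n : ℝ) * (q^2 + if i = x.1 then p^2 - q^2 else 0) := by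
      intro i
      have hpt : ∀ j : Fin n, sbmE p q x (i, j) * sbmE p q y (i, j)
          = q^2 + if i = x.1 then p^2 - q^2 else 0 := by
        intro j
        unfold sbmE
        by_cases hi : i = x.1
        · rw [if_pos hi, if_pos (hi.trans h), if_pos hi]; ring
        · rw [if_neg hi, if_neg (fun hh => hi (hh.trans h.symm)), if_neg hi]; ring
      rw [Finset.sum_congr rfl (fun j _ => hpt j), Finset.sum_const,
        Finset.card_univ, Fintype.card_fin, nsmul_eq_mul]
    rw [Finset.sum_congr rfl (fun i _ => key i), ← Finset.mul_sum,
      Finset.sum_add_distrib, Finset.sum_const, Finset.sum_ite_eq' Finset.univ x.1,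
      if_pos h]
    try simp only [Finset.mem_univ, if_true, Finset.card_univ, Fintype.card_fin,
      nsmul_eq_mul]
    try ring
  · have key : ∀ i : Fin k, ∑ j : Fin n, sbmE p q x (i, j) * sbmE p q y (i, j)
        = (n : ℝ) * (q^2 + ((if i = x.1 then p*q - q^2 else 0)
            + (if i = y.1 then p*q - q^2 else 0))) := by
      intro i
      have hpt : ∀ j : Fin n, sbmE p q x (i, j) * sbmE p q y (i, j)
          = q^2 + ((if i = x.1 then p*q - q^2 else 0)
            + (if i = y.1 then p*q - q^2 else 0)) := by
        intro j
        unfold sbmE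
        by_cases hix : i = x.1
        · have hiy : ¬ i = y.1 := fun hh => h (hix ▸ hh ▸ rfl)
          rw [if_pos hix, if_neg hiy, if_pos hix, if_neg hiy]; ring
        · by_cases hiy : i = y.1
          · rw [if_neg hix, if_pos hiy, if_neg hix, if_pos hiy]; ring
          · rw [if_neg hix, if_neg hiy, if_neg hix, if_neg hiy]; ring
      rw [Finset.sum_congr rfl (fun j _ => hpt j), Finset.sum_const,
        Finset.card_univ, Fintype.card_fin, nsmul_eq_mul]
    rw [Finset.sum_congr rfl (fun i _ => key i), ← Finset.mul_sum,
      Finset.sum_add_distrib, Finset.sum_const, Finset.sum_add_distrib,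
      Finset.sum_ite_eq' Finset.univ x.1, Finset.sum_ite_eq' Finset.univ y.1,
      if_neg h]
    simp only [Finset.mem_univ, if_true, Finset.card_univ, Fintype.card_fin,
      nsmul_eq_mul]
    ring

lemma sum_sbmM_mul {k n : ℕ} (p q : ℝ) (x y : Fin k × Fin n) (hxy : x ≠ y) :
    ∑ z : Fin k × Fin n, sbmM p q x z * sbmM p q y z =
      (n : ℝ) * ((k : ℝ) * q^2 +
        (if x.1 = y.1 then p^2 - q^2 else 2 * (p*q - q^2)))
      - 2 * p * (if x.1 = y.1 then p else q) := by
  have expand : ∀ z : Fin k × Fin n, sbmM p q x z * sbmM p q y z =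
      sbmE p q x z * sbmE p q y z
      - (if z = x then p * sbmE p q y z else 0)
      - (if z = y then sbmE p q x z * p else 0)
      + (if z = x then (if z = y then p * p else 0) else 0) := by
    intro z
    rw [sbmM_eq, sbmM_eq]
    by_cases h1 : z = x
    · by_cases h2 : z = y
      · exact absurd (h1.symm.trans h2) hxy
      · simp only [if_pos h1, if_neg h2]; ring
    · by_cases h2 : z = y
      · simp only [if_neg h1, if_pos h2]; ring
      · simp only [if_neg h1, if_neg h2]; ring
  rw [Finset.sum_congr rfl (fun z _ => expand z)]
  rw [Finset.sum_add_distrib, Finset.sum_sub_distrib, Finset.sum_sub_distrib,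
    Finset.sum_ite_eq' Finset.univ x, Finset.sum_ite_eq' Finset.univ y,
    Finset.sum_ite_eq' Finset.univ x, sum_sbmE_mul]
  simp only [Finset.mem_univ, if_true, if_neg hxy]
  have h1 : sbmE p q y x = if x.1 = y.1 then p else q := by
    unfold sbmE; by_cases h : x.1 = y.1 <;> simp [h, eq_comm]
  have h2 : sbmE p q x y = if x.1 = y.1 then p else q := by
    unfold sbmE; by_cases h : x.1 = y.1 <;> simp [h, eq_comm]
  rw [h1, h2]; ring

/-- In SBM(n,p,q,k) (vertex set `Fin k × Fin n`, within-cluster edge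
probability `p`, cross-cluster probability `q`, `0 < q < p < 1`, edges
independent), if `u, v` are distinct vertices in the same cluster and `u, w`
are in different clusters, then
`E[|N(u)∩N(v)|] - E[|N(u)∩N(w)|] = n(p-q)² - 2p(p-q)`. (Since `A(x,x) = 0`,
the sum `∑_z A(x,z)·A(y,z)` counts exactly the common neighbors of `x,y`.) -/
theorem sbm_expected_common_neighbors_gap
    {Ω : Type*} [MeasureSpace Ω] [IsProbabilityMeasure (ℙ : Measure Ω)]
    (n k : ℕ) (p q : ℝ) (hq : 0 < q) (hqp : q < p) (hp : p < 1)
    (A : (Fin k × Fin n) → (Fin k × Fin n) → Ω → ℝ)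
    (hsymm : ∀ u v, A u v = A v u)
    (hdiag : ∀ u ω, A u u ω = 0)
    (hbool : ∀ u v ω, A u v ω = 0 ∨ A u v ω = 1)
    (hmeas : ∀ u v, Measurable (A u v))
    (hmean_same : ∀ u v, u ≠ v → u.1 = v.1 → (∫ ω, A u v ω ∂ℙ) = p)
    (hmean_diff : ∀ u v, u.1 ≠ v.1 → (∫ ω, A u v ω ∂ℙ) = q)
    (hindep : ∀ u v u' v' : Fin k × Fin n, s(u, v) ≠ s(u', v') →
      (∫ ω, A u v ω * A u' v' ω ∂ℙ) = (∫ ω, A u v ω ∂ℙ) * (∫ ω, A u' v' ω ∂ℙ))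
    (u v w : Fin k × Fin n) (huv : u ≠ v) (hsame : u.1 = v.1) (hdiff : u.1 ≠ w.1) :
    (∫ ω, (∑ z, A u z ω * A v z ω) ∂ℙ) - (∫ ω, (∑ z, A u z ω * A w z ω) ∂ℙ)
      = (n : ℝ) * (p - q) ^ 2 - 2 * p * (p - q) := by
  classical
  have habs : ∀ x y (ω : Ω), ‖A x y ω‖ ≤ 1 := by
    intro x y ω; rcases hbool x y ω with h | h <;> simp [h]
  have hintmul : ∀ x y x' y' : Fin k × Fin n,
      Integrable (fun ω => A x y ω * A x' y' ω) ℙ := by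
    intro x y x' y'
    refine (integrable_const 1).mono'
      ((hmeas x y).mul (hmeas x' y')).aestronglyMeasurable
      (Filter.Eventually.of_forall fun ω => ?_)
    calc ‖A x y ω * A x' y' ω‖ = ‖A x y ω‖ * ‖A x' y' ω‖ := norm_mul _ _
      _ ≤ 1 * 1 := mul_le_mul (habs x y ω) (habs x' y' ω) (norm_nonneg _)
          zero_le_one
      _ = 1 := one_mul 1
  have hmean : ∀ x z : Fin k × Fin n, z ≠ x → (∫ ω, A x z ω ∂ℙ) = sbmE p q x z := by
    intro x z hzx
    unfold sbmE
    by_cases h : z.1 = x.1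
    · rw [if_pos h]; exact hmean_same x z (fun hh => hzx hh.symm) h.symm
    · rw [if_neg h]; exact hmean_diff x z (fun hh => h hh.symm)
  have key : ∀ x y : Fin k × Fin n, x ≠ y →
      (∫ ω, (∑ z, A x z ω * A y z ω) ∂ℙ) =
        ∑ z : Fin k × Fin n, sbmM p q x z * sbmM p q y z := by
    intro x y hxy
    rw [integral_finset_sum Finset.univ (fun z _ => hintmul x z y z)]
    refine Finset.sum_congr rfl fun z _ => ?_
    by_cases hzx : z = x
    · subst hzx; simp [hdiag, sbmM]
    · by_cases hzy : z = y
      · subst hzy; simp [hdiag, sbmM]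
      · have hne : s(x, z) ≠ s(y, z) := fun hcontra => by
          rcases Sym2.eq_iff.mp hcontra with ⟨h1, -⟩ | ⟨-, h2⟩
          · exact hxy h1
          · exact hzy h2
        rw [hindep x z y z hne, hmean x z hzx, hmean y z hzy]
        simp [sbmM, hzx, hzy]
  rw [key u v huv, key u w (fun h => hdiff (congrArg Prod.fst h)),
    sum_sbmM_mul p q u v huv, sum_sbmM_mul p q u w (fun h => hdiff (congrArg Prod.fst h))]
  rw [if_pos hsame, if_pos hsame, if_neg hdiff, if_neg hdiff]
  ring
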